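/- Let n ∈ ℕ, A ∈ ℝ^{n×n}, B ∈ ℝⁿ, c ∈ ℝⁿ, D ∈ ℝ, and let ν₁ ≤ 0, ρ₁ ∈ ℝ, ε₁ > 0, ε₂ > 0. Suppose there exists a symmetric positive-definite X ∈ ℝ^{n×n} such that the symmetric (n+2)×(n+2) block matrix with row/column blocks of sizes (n,1,1) and entries: (1,1) = AᵀXA − X, (1,2) = AᵀXB − c/2, (1,3) = (ε₁ − ν₁)^{1/2} c, (2,2) = BᵀXB − D + (ε₂ − ρ₁), (2,3) = (ε₁ − ν₁)^{1/2} D, (3,3) = −1, is negative definite. Then for every input u : ℕ → ℝ and the trajectory with x(0) = 0, x(t+1) = A x(t) + B u(t), y(t) = cᵀ x(t) + D u(t), one has Σ_{t=0}^{t_f} ( y(t) u(t) + (ν₁ − ε₁) y(t)² + (ρ₁ − ε₂) u(t)² ) ≥ 0 for every t_f ∈ ℕ; that is, the system is output-feedback passive with ρ_c = −ν₁ + ε₁ and input-feedforward passive with ν_c = −ρ₁ + ε₂. -/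

import Mathlib

open Matrix

private lemma pass_L1 {m : Type*} [Fintype m] (f : m → ℝ) (v : m → ℝ) (a : ℝ) :
    v ⬝ᵥ ((Matrix.of fun i (_ : Fin 1) => f i) *ᵥ fun _ => a) = a * (v ⬝ᵥ f) := by
  simp [Matrix.mulVec, dotProduct, Finset.mul_sum]
  exact Finset.sum_congr rfl fun i _ => by ring

private lemma pass_L2 {m : Type*} [Fintype m] (f : m → ℝ) (v : m → ℝ) (a : ℝ) :
    (fun _ : Fin 1 => a) ⬝ᵥ ((Matrix.of fun (_ : Fin 1) j => f j) *ᵥ v) = a * (f ⬝ᵥ v) := by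
  simp [Matrix.mulVec, dotProduct, Finset.mul_sum]

private lemma pass_L3 (k a b : ℝ) :
    (fun _ : Fin 1 => a) ⬝ᵥ ((Matrix.of fun (_ _ : Fin 1) => k) *ᵥ fun _ => b) = a * (k * b) := by
  simp [Matrix.mulVec, dotProduct]

private lemma pass_L4 {m : Type*} [Fintype m] (p q v : m → ℝ) :
    v ⬝ᵥ (fun i => p i - q i / 2) = v ⬝ᵥ p - (v ⬝ᵥ q) / 2 := by
  simp [dotProduct, mul_sub, Finset.sum_sub_distrib, Finset.sum_div, mul_div_assoc]

private lemma pass_L4' {m : Type*} [Fintype m] (p q v : m → ℝ) :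
    (fun i => p i - q i / 2) ⬝ᵥ v = p ⬝ᵥ v - (q ⬝ᵥ v) / 2 := by
  simp [dotProduct, sub_mul, Finset.sum_sub_distrib, Finset.sum_div, div_mul_eq_mul_div]

private lemma pass_L5 {m : Type*} [Fintype m] (k : ℝ) (c v : m → ℝ) :
    v ⬝ᵥ (fun j => k * c j) = k * (v ⬝ᵥ c) := by
  simp [dotProduct, Finset.mul_sum]
  exact Finset.sum_congr rfl fun i _ => by ring

private lemma pass_L5' {m : Type*} [Fintype m] (k : ℝ) (c v : m → ℝ) :
    (fun j => k * c j) ⬝ᵥ v = k * (c ⬝ᵥ v) := by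
  simp [dotProduct, Finset.mul_sum, mul_assoc]

private lemma pass_L6 (a b : ℝ) : (fun _ : Fin 1 => a) ⬝ᵥ (fun _ => b) = a * b := by
  simp [dotProduct]

private lemma pass_mulVec_tr {n : ℕ} (M : Matrix (Fin n) (Fin n) ℝ) (v z : Fin n → ℝ) :
    (M *ᵥ v) ⬝ᵥ z = v ⬝ᵥ (Mᵀ *ᵥ z) := by
  rw [Matrix.dotProduct_mulVec, Matrix.vecMul_transpose]

private lemma pass_expandV (n : ℕ) (A X : Matrix (Fin n) (Fin n) ℝ) (B : Fin n → ℝ)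
    (hsym : Xᵀ = X) (xv : Fin n → ℝ) (uu : ℝ) :
    (A *ᵥ xv + uu • B) ⬝ᵥ X *ᵥ (A *ᵥ xv + uu • B)
      = xv ⬝ᵥ ((Aᵀ * X * A) *ᵥ xv) + 2 * uu * (xv ⬝ᵥ (Aᵀ *ᵥ (X *ᵥ B)))
        + uu ^ 2 * (B ⬝ᵥ X *ᵥ B) := by
  have h3 : B ⬝ᵥ X *ᵥ (A *ᵥ xv) = xv ⬝ᵥ (Aᵀ *ᵥ (X *ᵥ B)) := by
    rw [dotProduct_comm, pass_mulVec_tr X, hsym, pass_mulVec_tr A, dotProduct_comm]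
  have h2 : (A *ᵥ xv) ⬝ᵥ (X *ᵥ B) = xv ⬝ᵥ (Aᵀ *ᵥ (X *ᵥ B)) := pass_mulVec_tr A xv _
  have h1 : (A *ᵥ xv) ⬝ᵥ (X *ᵥ (A *ᵥ xv)) = xv ⬝ᵥ ((Aᵀ * X * A) *ᵥ xv) := by
    rw [pass_mulVec_tr A xv, Matrix.mulVec_mulVec, Matrix.mulVec_mulVec, Matrix.mul_assoc]
  rw [Matrix.mulVec_add, Matrix.mulVec_smul, dotProduct_add, add_dotProduct,
    add_dotProduct, dotProduct_smul, smul_dotProduct,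
    smul_dotProduct, dotProduct_smul, h1, h2, h3]
  simp [smul_eq_mul]; ring

/-- Case A of Theorem 2: the KYP-type LMI (with Schur-complement block
structure of sizes (n,1,1)) certifies that the state-space system
`(A, B, cᵀ, D)` is output-feedback passive with `ρc = −ν₁ + ε₁` and
input-feedforward passive with `νc = −ρ₁ + ε₂`. -/
theorem stmt6 (n : ℕ) (A : Matrix (Fin n) (Fin n) ℝ) (B c : Fin n → ℝ)
    (D ν₁ ρ₁ ε₁ ε₂ : ℝ) (hν₁ : ν₁ ≤ 0) (hε₁ : 0 < ε₁) (hε₂ : 0 < ε₂)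
    (hX : ∃ X : Matrix (Fin n) (Fin n) ℝ, X.PosDef ∧
      (-(Matrix.fromBlocks
        (Matrix.fromBlocks
          (Aᵀ * X * A - X)
          (Matrix.of fun i (_ : Fin 1) => Aᵀ.mulVec (X.mulVec B) i - c i / 2)
          (Matrix.of fun (_ : Fin 1) j => Aᵀ.mulVec (X.mulVec B) j - c j / 2)
          (Matrix.of fun (_ _ : Fin 1) => B ⬝ᵥ X.mulVec B - D + (ε₂ - ρ₁)))
        (Matrix.of fun (i : Fin n ⊕ Fin 1) (_ : Fin 1) =>
          Sum.elim (fun j => Real.sqrt (ε₁ - ν₁) * c j)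
            (fun _ => Real.sqrt (ε₁ - ν₁) * D) i)
        (Matrix.of fun (_ : Fin 1) (j : Fin n ⊕ Fin 1) =>
          Sum.elim (fun j => Real.sqrt (ε₁ - ν₁) * c j)
            (fun _ => Real.sqrt (ε₁ - ν₁) * D) j)
        (Matrix.of fun (_ _ : Fin 1) => (-1 : ℝ)))).PosDef) :
    ∀ (u : ℕ → ℝ) (x : ℕ → Fin n → ℝ) (y : ℕ → ℝ),
      x 0 = 0 →
      (∀ t, x (t + 1) = A.mulVec (x t) + u t • B) →
      (∀ t, y t = c ⬝ᵥ x t + D * u t) →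
      ∀ tf : ℕ,
        0 ≤ ∑ t ∈ Finset.range (tf + 1),
          (y t * u t + (ν₁ - ε₁) * (y t) ^ 2 + (ρ₁ - ε₂) * (u t) ^ 2) := by
  obtain ⟨X, hXpd, hM⟩ := hX
  have hsym : Xᵀ = X := by simpa [Matrix.IsSymm] using hXpd.1
  have he : 0 ≤ ε₁ - ν₁ := by linarith
  have hsq : Real.sqrt (ε₁ - ν₁) ^ 2 = ε₁ - ν₁ := Real.sq_sqrt he
  have key : ∀ (xv : Fin n → ℝ) (uu : ℝ),
      (A *ᵥ xv + uu • B) ⬝ᵥ X *ᵥ (A *ᵥ xv + uu • B) - xv ⬝ᵥ X *ᵥ xv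
        ≤ (c ⬝ᵥ xv + D * uu) * uu + (ν₁ - ε₁) * (c ⬝ᵥ xv + D * uu) ^ 2
          + (ρ₁ - ε₂) * uu ^ 2 := by
    intro xv uu
    have h := hM.posSemidef.dotProduct_mulVec_nonneg (Sum.elim (Sum.elim xv (fun _ => uu))
      (fun _ => Real.sqrt (ε₁ - ν₁) * (c ⬝ᵥ xv + D * uu)))
    simp only [star_trivial, Matrix.neg_mulVec, Matrix.fromBlocks_mulVec,
      dotProduct_neg, Sum.elim_comp_inl, Sum.elim_comp_inr,
      sumElim_dotProduct_sumElim, dotProduct_add,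
      Matrix.sub_mulVec, dotProduct_sub,
      pass_L1, pass_L2, pass_L3, pass_L4, pass_L4', pass_L5, pass_L5', pass_L6] at h
    simp only [sumElim_dotProduct_sumElim, pass_L4, pass_L4', pass_L5,
      pass_L5', pass_L6, dotProduct_comm c xv,
      dotProduct_comm (Aᵀ *ᵥ X *ᵥ B) xv] at h
    rw [pass_expandV n A X B hsym xv uu]
    ring_nf at h ⊢
    rw [hsq] at h
    ring_nf at h
    rw [dotProduct_comm xv c] at h
    linarith
  intro u x y hx0 hxs hy tf
  have hstep : ∀ t, x (t+1) ⬝ᵥ X *ᵥ x (t+1) - x t ⬝ᵥ X *ᵥ x t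
      ≤ y t * u t + (ν₁ - ε₁) * (y t) ^ 2 + (ρ₁ - ε₂) * (u t) ^ 2 := by
    intro t
    rw [hxs t, hy t]
    exact key (x t) (u t)
  have hV0 : x 0 ⬝ᵥ X *ᵥ x 0 = 0 := by rw [hx0]; simp
  have hVpos : 0 ≤ x (tf+1) ⬝ᵥ X *ᵥ x (tf+1) := by
    have := hXpd.posSemidef.dotProduct_mulVec_nonneg (x (tf+1))
    simpa using this
  calc (0:ℝ) ≤ x (tf+1) ⬝ᵥ X *ᵥ x (tf+1) - x 0 ⬝ᵥ X *ᵥ x 0 := by rw [hV0]; linarith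
    _ = ∑ t ∈ Finset.range (tf+1),
        (x (t+1) ⬝ᵥ X *ᵥ x (t+1) - x t ⬝ᵥ X *ᵥ x t) :=
      (Finset.sum_range_sub (fun t => x t ⬝ᵥ X *ᵥ x t) (tf+1)).symm
    _ ≤ ∑ t ∈ Finset.range (tf+1),
        (y t * u t + (ν₁ - ε₁) * (y t) ^ 2 + (ρ₁ - ε₂) * (u t) ^ 2) :=
      Finset.sum_le_sum fun t _ => hstep t
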